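/- For fixed l ≥ 2 and all m ≥ 1, the number S_l of stopping sets of size l of the m×(2^m−1) full-rank parity-check matrix of the Hamming code satisfies (2^l − l)^m − (l + C(l,2))·2^{(l−1)m} ≤ l!·S_l ≤ (2^l − l)^m. Consequently, for fixed l ≥ 3, l!·S_l / (2^l − l)^m → 1 as m → ∞. -/

import Mathlib

open Finset

/-- A subset `S` of column indices is a stopping set of `H` if no row of `H`
restricted to `S` has weight exactly one. -/
def IsStoppingSet {r n : ℕ} (H : Matrix (Fin r) (Fin n) (ZMod 2)) (S : Finset (Fin n)) : Prop :=
  ∀ i, (S.filter fun j => H i j = 1).card ≠ 1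

/-- The number of stopping sets of `H` of size `l`. -/
noncomputable def numStoppingSets {r n : ℕ} (H : Matrix (Fin r) (Fin n) (ZMod 2)) (l : ℕ) : ℕ :=
  Nat.card {S : Finset (Fin n) // IsStoppingSet H S ∧ S.card = l}

open scoped Classical

/-- The set of `m × l` matrices with no row of weight one. -/
noncomputable def NRWset (l m : ℕ) : Finset (Fin m → Fin l → ZMod 2) :=
  univ.filter fun M => ∀ i, (univ.filter fun j => M i j = 1).card ≠ 1

/-- The set of `m × l` matrices with no row of weight one and distinct nonzero columns. -/
noncomputable def Tset (l m : ℕ) : Finset (Fin m → Fin l → ZMod 2) :=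
  (NRWset l m).filter fun M =>
    (Function.Injective fun j => (fun i => M i j)) ∧ ∀ j, (fun i => M i j) ≠ 0

lemma aux_card_wt_one (l : ℕ) :
    (univ.filter fun v : Fin l → ZMod 2 => (univ.filter fun j => v j = 1).card = 1).card = l := by
  have hind : ∀ j : Fin l, (univ.filter fun i => (if i = j then (1:ZMod 2) else 0) = 1) = {j} := by
    intro j; ext i; simp only [mem_filter, mem_univ, true_and, mem_singleton]
    constructor
    · intro h; by_contra hne; simp [hne] at h
    · intro h; simp [h]
  have himg : (univ.filter fun v : Fin l → ZMod 2 => (univ.filter fun j => v j = 1).card = 1)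
      = univ.image (fun j : Fin l => fun i => if i = j then (1:ZMod 2) else 0) := by
    ext v
    simp only [mem_filter, mem_univ, true_and, mem_image]
    constructor
    · intro h
      obtain ⟨j, hj⟩ := Finset.card_eq_one.mp h
      refine ⟨j, ?_⟩
      funext i
      have h01 : ∀ x : ZMod 2, x = 0 ∨ x = 1 := by decide
      by_cases hij : i = j
      · have : i ∈ univ.filter fun j => v j = 1 := by rw [hj]; simp [hij]
        simp [mem_filter] at this; subst hij; simp [this]
      · have : i ∉ univ.filter fun j => v j = 1 := by rw [hj]; simp [hij]
        simp [mem_filter] at this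
        rcases h01 (v i) with h0 | h1
        · simp [hij, h0]
        · exact absurd h1 this
    · rintro ⟨j, rfl⟩; rw [hind j]; simp
  rw [himg, Finset.card_image_of_injective _ ?_, card_univ, Fintype.card_fin]
  intro a b hab
  have := congrFun hab a
  simp at this
  by_contra hne
  simp [hne] at this

lemma aux_card_W (l : ℕ) :
    (univ.filter fun v : Fin l → ZMod 2 => (univ.filter fun j => v j = 1).card ≠ 1).card
      = 2 ^ l - l := by
  have hcardU : (univ : Finset (Fin l → ZMod 2)).card = 2 ^ l := by
    rw [card_univ, Fintype.card_fun]
    simp [ZMod.card]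
  have h1 := aux_card_wt_one l
  have hsd : (univ.filter fun v : Fin l → ZMod 2 => (univ.filter fun j => v j = 1).card ≠ 1)
      = univ \ (univ.filter fun v : Fin l → ZMod 2 => (univ.filter fun j => v j = 1).card = 1) := by
    ext v
    simp [mem_sdiff]
  rw [hsd, Finset.card_sdiff_of_subset (Finset.filter_subset _ _), hcardU, h1]

lemma aux_card_NRW (l m : ℕ) : (NRWset l m).card = (2 ^ l - l) ^ m := by
  have hpi : NRWset l m = Fintype.piFinset
      (fun _ : Fin m => univ.filter fun v : Fin l → ZMod 2 =>
        (univ.filter fun j => v j = 1).card ≠ 1) := by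
    ext M
    simp only [NRWset, mem_filter, mem_univ, true_and, Fintype.mem_piFinset]
  rw [hpi, Fintype.card_piFinset]
  simp [aux_card_W l]

lemma aux_lt_two_pow (l : ℕ) : l < 2 ^ l := Nat.lt_two_pow_self (n := l)

section PerM

variable {l m : ℕ} (H : Matrix (Fin m) (Fin (2 ^ m - 1)) (ZMod 2))

lemma aux_filter_image (f : Fin l → Fin (2 ^ m - 1)) (hf : Function.Injective f) (i : Fin m) :
    ((univ.image f).filter fun c => H i c = 1).card
      = (univ.filter fun j => H i (f j) = 1).card := by
  rw [Finset.filter_image, Finset.card_image_of_injective _ hf]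

/-- Step A: counting injections with stopping image. -/
lemma aux_stepA :
    (univ.filter fun f : Fin l → Fin (2 ^ m - 1) =>
        Function.Injective f ∧ IsStoppingSet H (univ.image f)).card
      = l.factorial * numStoppingSets H l := by
  set Eset := univ.filter fun f : Fin l → Fin (2 ^ m - 1) =>
      Function.Injective f ∧ IsStoppingSet H (univ.image f) with hE
  set Bset := univ.filter fun S : Finset (Fin (2 ^ m - 1)) =>
      IsStoppingSet H S ∧ S.card = l with hBs
  have hmap : ∀ f ∈ Eset, univ.image f ∈ Bset := by
    intro f hf
    simp only [hE, mem_filter, mem_univ, true_and] at hf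
    simp only [hBs, mem_filter, mem_univ, true_and]
    exact ⟨hf.2, by rw [Finset.card_image_of_injective _ hf.1, card_univ, Fintype.card_fin]⟩
  rw [Finset.card_eq_sum_card_fiberwise hmap]
  have hfib : ∀ S ∈ Bset, (Eset.filter fun f => univ.image f = S).card = l.factorial := by
    intro S hS
    simp only [hBs, mem_filter, mem_univ, true_and] at hS
    obtain ⟨hSstop, hScard⟩ := hS
    have : (Eset.filter fun f => univ.image f = S).card
        = (univ : Finset (Fin l ↪ {x // x ∈ S})).card := by
      refine Finset.card_bij' (fun f hf => ?_) (fun g _ => fun a => (g a : Fin (2 ^ m - 1)))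
        ?_ ?_ ?_ ?_
      · -- forward map
        simp only [hE, mem_filter, mem_univ, true_and] at hf
        exact ⟨fun a => ⟨f a, by rw [← hf.2]; exact Finset.mem_image_of_mem f (mem_univ a)⟩,
          fun a b hab => hf.1.1 (congrArg Subtype.val hab)⟩
      · intro f hf; exact mem_univ _
      · -- backward maps into the fiber
        intro g _
        have hginj : Function.Injective fun a => (g a : Fin (2 ^ m - 1)) :=
          fun a b hab => g.injective (Subtype.ext hab)
      -- image equals S
        have himg : univ.image (fun a => (g a : Fin (2 ^ m - 1))) = S := by
          apply Finset.eq_of_subset_of_card_le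
          · intro x hx
            simp only [mem_image, mem_univ, true_and] at hx
            obtain ⟨a, rfl⟩ := hx
            exact (g a).2
          · rw [Finset.card_image_of_injective _ hginj, card_univ, Fintype.card_fin, hScard]
        simp only [hE, mem_filter, mem_univ, true_and]
        exact ⟨⟨hginj, by rw [himg]; exact hSstop⟩, himg⟩
      · intro f hf; rfl
      · intro g hg; ext a; rfl
    rw [this, card_univ, Fintype.card_embedding_eq, Fintype.card_fin, Fintype.card_coe, hScard,
      Nat.descFactorial_self]
  rw [Finset.sum_congr rfl hfib, Finset.sum_const, smul_eq_mul, mul_comm]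
  congr 1
  rw [numStoppingSets, Nat.card_eq_fintype_card, Fintype.card_subtype]

/-- Step B: bijection between injections with stopping image and good matrices. -/
lemma aux_stepB
    (hinj : Function.Injective (fun j : Fin (2 ^ m - 1) => fun i => H i j))
    (hnz : ∀ j, (fun i => H i j) ≠ (0 : Fin m → ZMod 2)) :
    (univ.filter fun f : Fin l → Fin (2 ^ m - 1) =>
        Function.Injective f ∧ IsStoppingSet H (univ.image f)).card
      = (Tset l m).card := by
  have hcol : Function.Bijective
      (fun j : Fin (2 ^ m - 1) => (⟨fun i => H i j, hnz j⟩ : {v : Fin m → ZMod 2 // v ≠ 0})) := by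
    rw [Fintype.bijective_iff_injective_and_card]
    constructor
    · intro a b hab
      exact hinj (congrArg Subtype.val hab)
    · have h1 : Fintype.card {v : Fin m → ZMod 2 // v = 0} = 1 := Fintype.card_subtype_eq 0
      have h2 : Fintype.card {v : Fin m → ZMod 2 // v ≠ 0}
          = Fintype.card (Fin m → ZMod 2) - Fintype.card {v : Fin m → ZMod 2 // v = 0} :=
        Fintype.card_subtype_compl _
      have h3 : Fintype.card (Fin m → ZMod 2) = 2 ^ m := by
        rw [Fintype.card_fun]; simp [ZMod.card]
      rw [Fintype.card_fin, h2, h1, h3]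
  refine Finset.card_bij (fun f _ => fun i j => H i (f j)) ?_ ?_ ?_
  · -- maps into Tset
    intro f hf
    simp only [mem_filter, mem_univ, true_and] at hf
    obtain ⟨hfinj, hfstop⟩ := hf
    simp only [Tset, NRWset, mem_filter, mem_univ, true_and]
    refine ⟨fun i => ?_, fun a b hab => ?_, fun j => hnz (f j)⟩
    · rw [← aux_filter_image H f hfinj i]
      exact hfstop i
    · exact hfinj (hinj hab)
  · -- injective
    intro f₁ hf₁ f₂ hf₂ h
    funext j
    apply hinj
    funext i
    exact congrFun (congrFun h i) j
  · -- surjective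
    intro M hM
    simp only [Tset, NRWset, mem_filter, mem_univ, true_and] at hM
    obtain ⟨hMnrw, hMinj, hMnz⟩ := hM
    have hsurj := hcol.surjective
    choose f hfspec using fun j => hsurj ⟨fun i => M i j, hMnz j⟩
    have hcolval : ∀ j, (fun i => H i (f j)) = fun i => M i j := by
      intro j
      exact congrArg Subtype.val (hfspec j)
    have hfinj : Function.Injective f := by
      intro a b hab
      apply hMinj
      show (fun i => M i a) = fun i => M i b
      rw [← hcolval a, ← hcolval b, hab]
    refine ⟨f, ?_, ?_⟩
    · simp only [mem_filter, mem_univ, true_and]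
      refine ⟨hfinj, fun i => ?_⟩
      rw [aux_filter_image H f hfinj i]
      have : (univ.filter fun j => H i (f j) = 1) = (univ.filter fun j => M i j = 1) := by
        apply Finset.filter_congr
        intro j _
        rw [congrFun (hcolval j) i]
      rw [this]
      exact hMnrw i
    · funext i j
      exact congrFun (hcolval j) i

end PerM

lemma aux_card_colzero (l m : ℕ) (j : Fin l) :
    (univ.filter fun M : Fin m → Fin l → ZMod 2 => (fun i => M i j) = 0).card
      ≤ 2 ^ ((l - 1) * m) := by
  have hle : (univ.filter fun M : Fin m → Fin l → ZMod 2 => (fun i => M i j) = 0).card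
      ≤ (univ : Finset (Fin m → {x : Fin l // x ≠ j} → ZMod 2)).card := by
    apply Finset.card_le_card_of_injOn (fun M => fun i (x : {x : Fin l // x ≠ j}) => M i x)
      (fun _ _ => mem_univ _)
    intro M hM M' hM' hMM'
    simp only [coe_filter, Set.mem_setOf_eq, mem_univ, true_and] at hM hM'
    funext i k
    by_cases hk : k = j
    · subst hk
      rw [congrFun hM i, congrFun hM' i]
    · exact congrFun (congrFun hMM' i) ⟨k, hk⟩
  calc (univ.filter fun M : Fin m → Fin l → ZMod 2 => (fun i => M i j) = 0).card
      ≤ (univ : Finset (Fin m → {x : Fin l // x ≠ j} → ZMod 2)).card := hle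
    _ = 2 ^ ((l - 1) * m) := by
        rw [card_univ, Fintype.card_fun, Fintype.card_fun]
        have : Fintype.card {x : Fin l // x ≠ j}
            = Fintype.card (Fin l) - Fintype.card {x : Fin l // x = j} :=
          Fintype.card_subtype_compl _
        rw [ZMod.card, this, Fintype.card_subtype_eq, Fintype.card_fin, Fintype.card_fin,
          ← pow_mul]

lemma aux_card_coleq (l m : ℕ) (j k : Fin l) (hjk : j ≠ k) :
    (univ.filter fun M : Fin m → Fin l → ZMod 2 => (fun i => M i j) = fun i => M i k).card
      ≤ 2 ^ ((l - 1) * m) := by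
  have hle : (univ.filter fun M : Fin m → Fin l → ZMod 2 =>
        (fun i => M i j) = fun i => M i k).card
      ≤ (univ : Finset (Fin m → {x : Fin l // x ≠ k} → ZMod 2)).card := by
    apply Finset.card_le_card_of_injOn (fun M => fun i (x : {x : Fin l // x ≠ k}) => M i x)
      (fun _ _ => mem_univ _)
    intro M hM M' hM' hMM'
    simp only [coe_filter, Set.mem_setOf_eq, mem_univ, true_and] at hM hM'
    funext i x
    by_cases hx : x = k
    · subst hx
      rw [← congrFun hM i, ← congrFun hM' i]
      exact congrFun (congrFun hMM' i) ⟨j, hjk⟩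
    · exact congrFun (congrFun hMM' i) ⟨x, hx⟩
  calc _ ≤ (univ : Finset (Fin m → {x : Fin l // x ≠ k} → ZMod 2)).card := hle
    _ = 2 ^ ((l - 1) * m) := by
        rw [card_univ, Fintype.card_fun, Fintype.card_fun]
        have : Fintype.card {x : Fin l // x ≠ k}
            = Fintype.card (Fin l) - Fintype.card {x : Fin l // x = k} :=
          Fintype.card_subtype_compl _
        rw [ZMod.card, this, Fintype.card_subtype_eq, Fintype.card_fin, Fintype.card_fin,
          ← pow_mul]

lemma aux_card_pairs (l : ℕ) :
    (univ.filter fun p : Fin l × Fin l => p.1 < p.2).card = l.choose 2 := by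
  rw [Finset.card_eq_sum_card_fiberwise (f := fun p => p.2) (t := univ) (fun _ _ => mem_univ _)]
  have hfib : ∀ k : Fin l,
      (((univ : Finset (Fin l × Fin l)).filter fun p => p.1 < p.2).filter
          fun p => p.2 = k).card = (k : ℕ) := by
    intro k
    have : (((univ : Finset (Fin l × Fin l)).filter fun p => p.1 < p.2).filter fun p => p.2 = k)
        = (Finset.Iio k).image (fun j => (j, k)) := by
      ext p
      simp only [mem_filter, mem_univ, true_and, mem_image, mem_Iio]
      constructor
      · rintro ⟨h1, h2⟩
        exact ⟨p.1, by rw [← h2]; exact h1, by rw [← h2]⟩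
      · rintro ⟨j, hj, rfl⟩
        exact ⟨hj, rfl⟩
    rw [this, Finset.card_image_of_injective _ (fun a b hab => (Prod.mk.injEq _ _ _ _ ▸ hab).1),
      Fin.card_Iio]
  rw [Finset.sum_congr rfl (fun k _ => hfib k), Fin.sum_univ_eq_sum_range (fun i => i)]
  have h2 := Finset.sum_range_id_mul_two l
  rw [Nat.choose_two_right]
  omega

lemma aux_lower (l m : ℕ) :
    (NRWset l m).card ≤ (Tset l m).card + (l + l.choose 2) * 2 ^ ((l - 1) * m) := by
  set X := 2 ^ ((l - 1) * m) with hX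
  set B1 : Finset (Fin m → Fin l → ZMod 2) :=
    univ.biUnion (fun j : Fin l => univ.filter fun M => (fun i => M i j) = 0) with hB1
  set B2 : Finset (Fin m → Fin l → ZMod 2) :=
    ((univ : Finset (Fin l × Fin l)).filter fun p => p.1 < p.2).biUnion
      (fun p => univ.filter fun M => (fun i => M i p.1) = fun i => M i p.2) with hB2
  have hsub : NRWset l m \ Tset l m ⊆ B1 ∪ B2 := by
    intro M hM
    rw [mem_sdiff] at hM
    obtain ⟨hMn, hMt⟩ := hM
    have hnd : ¬((Function.Injective fun j => (fun i => M i j)) ∧ ∀ j, (fun i => M i j) ≠ 0) := by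
      intro h
      exact hMt (Finset.mem_filter.mpr ⟨hMn, h⟩)
    rw [mem_union]
    by_cases hz : ∃ j, (fun i => M i j) = 0
    · left
      obtain ⟨j, hj⟩ := hz
      exact Finset.mem_biUnion.mpr ⟨j, mem_univ j, Finset.mem_filter.mpr ⟨mem_univ M, hj⟩⟩
    · right
      push_neg at hz
      have hni : ¬Function.Injective fun j => (fun i => M i j) := by
        intro h; exact hnd ⟨h, hz⟩
      obtain ⟨a, b, hab, hne⟩ := Function.not_injective_iff.mp hni
      rcases lt_or_gt_of_ne hne with hlt | hgt
      · exact Finset.mem_biUnion.mpr ⟨(a, b),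
          Finset.mem_filter.mpr ⟨mem_univ _, hlt⟩,
          Finset.mem_filter.mpr ⟨mem_univ M, hab⟩⟩
      · exact Finset.mem_biUnion.mpr ⟨(b, a),
          Finset.mem_filter.mpr ⟨mem_univ _, hgt⟩,
          Finset.mem_filter.mpr ⟨mem_univ M, hab.symm⟩⟩
  have hB1card : B1.card ≤ l * X := by
    calc B1.card ≤ ∑ j : Fin l,
          (univ.filter fun M : Fin m → Fin l → ZMod 2 => (fun i => M i j) = 0).card :=
        Finset.card_biUnion_le
      _ ≤ ∑ _j : Fin l, X := Finset.sum_le_sum (fun j _ => aux_card_colzero l m j)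
      _ = l * X := by rw [Finset.sum_const, card_univ, Fintype.card_fin, smul_eq_mul]
  have hB2card : B2.card ≤ l.choose 2 * X := by
    calc B2.card ≤ ∑ p ∈ (univ : Finset (Fin l × Fin l)).filter (fun p => p.1 < p.2),
          (univ.filter fun M : Fin m → Fin l → ZMod 2 =>
            (fun i => M i p.1) = fun i => M i p.2).card := Finset.card_biUnion_le
      _ ≤ ∑ p ∈ (univ : Finset (Fin l × Fin l)).filter (fun p => p.1 < p.2), X := by
          apply Finset.sum_le_sum
          intro p hp
          rw [mem_filter] at hp
          exact aux_card_coleq l m p.1 p.2 (ne_of_lt hp.2)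
      _ = l.choose 2 * X := by rw [Finset.sum_const, aux_card_pairs, smul_eq_mul]
  have hTsub : Tset l m ⊆ NRWset l m := Finset.filter_subset _ _
  have hsplit := Finset.card_sdiff_add_card_eq_card hTsub
  have hdiff : (NRWset l m \ Tset l m).card ≤ B1.card + B2.card :=
    le_trans (Finset.card_le_card hsub) (Finset.card_union_le _ _)
  have : (NRWset l m \ Tset l m).card ≤ (l + l.choose 2) * X := by
    calc (NRWset l m \ Tset l m).card ≤ B1.card + B2.card := hdiff
      _ ≤ l * X + l.choose 2 * X := Nat.add_le_add hB1card hB2card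
      _ = (l + l.choose 2) * X := by ring
  omega

/-- Combined per-`m` counting result. -/
lemma aux_key (l m : ℕ)
    (H : Matrix (Fin m) (Fin (2 ^ m - 1)) (ZMod 2))
    (hinj : Function.Injective (fun j : Fin (2 ^ m - 1) => fun i => H i j))
    (hnz : ∀ j, (fun i => H i j) ≠ (0 : Fin m → ZMod 2)) :
    l.factorial * numStoppingSets H l ≤ (2 ^ l - l) ^ m ∧
      (2 ^ l - l) ^ m ≤ l.factorial * numStoppingSets H l + (l + l.choose 2) * 2 ^ ((l - 1) * m) := by
  have hT : (Tset l m).card = l.factorial * numStoppingSets H l := by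
    rw [← aux_stepB H hinj hnz, aux_stepA H]
  have hTsub : (Tset l m).card ≤ (NRWset l m).card :=
    Finset.card_le_card (Finset.filter_subset _ _)
  have hN := aux_card_NRW l m
  have hLow := aux_lower l m
  constructor
  · rw [← hT, ← hN]; exact hTsub
  · rw [← hT, ← hN]; exact hLow

lemma aux_lt_pow_pred (l : ℕ) (hl : 3 ≤ l) : l < 2 ^ (l - 1) := by
  induction l with
  | zero => omega
  | succ n ih =>
    rcases Nat.lt_or_ge n 3 with h | h
    · interval_cases n <;> simp_all
    · have hn := ih (by omega)
      have : n + 1 ≤ 2 * n := by omega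
      calc n + 1 ≤ 2 * n := this
        _ < 2 * 2 ^ (n - 1) := by omega
        _ = 2 ^ (n + 1 - 1) := by
            rw [Nat.add_sub_cancel, ← pow_succ']
            congr 1
            omega

/-- Bounds on l!·S_l for the Hamming code parity-check matrices and the resulting
asymptotics l!·S_l / (2^l − l)^m → 1 for fixed l ≥ 3. -/
theorem stmt17 (l : ℕ) (hl : 2 ≤ l)
    (H : ∀ m : ℕ, Matrix (Fin m) (Fin (2 ^ m - 1)) (ZMod 2))
    (hinj : ∀ m, Function.Injective (fun j : Fin (2 ^ m - 1) => fun i => H m i j))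
    (hnz : ∀ m, ∀ j, (fun i => H m i j) ≠ (0 : Fin m → ZMod 2)) :
    (∀ m : ℕ, 1 ≤ m →
      ((2 : ℤ) ^ l - l) ^ m - (l + l.choose 2) * 2 ^ ((l - 1) * m) ≤
          (l.factorial : ℤ) * numStoppingSets (H m) l ∧
        (l.factorial : ℤ) * numStoppingSets (H m) l ≤ ((2 : ℤ) ^ l - l) ^ m) ∧
    (3 ≤ l →
      Filter.Tendsto
        (fun m : ℕ => (l.factorial * numStoppingSets (H m) l : ℝ) / ((2 : ℝ) ^ l - l) ^ m)
        Filter.atTop (nhds 1)) := by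
  have hl2 : l ≤ 2 ^ l := (aux_lt_two_pow l).le
  have key : ∀ m : ℕ,
      ((2 : ℤ) ^ l - l) ^ m - (l + l.choose 2) * 2 ^ ((l - 1) * m) ≤
          (l.factorial : ℤ) * numStoppingSets (H m) l ∧
        (l.factorial : ℤ) * numStoppingSets (H m) l ≤ ((2 : ℤ) ^ l - l) ^ m := by
    intro m
    obtain ⟨h1, h2⟩ := aux_key l m (H m) (hinj m) (hnz m)
    have hcast : ((2 ^ l - l : ℕ) : ℤ) = (2 : ℤ) ^ l - l := by
      push_cast [Nat.cast_sub hl2]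
      ring
    constructor
    · have : ((2 ^ l - l : ℕ) ^ m : ℤ) ≤
          ((l.factorial * numStoppingSets (H m) l + (l + l.choose 2) * 2 ^ ((l - 1) * m) : ℕ) : ℤ) := by
        exact_mod_cast h2
      push_cast [hcast] at this ⊢
      linarith
    · have : ((l.factorial * numStoppingSets (H m) l : ℕ) : ℤ) ≤ ((2 ^ l - l : ℕ) ^ m : ℤ) := by
        exact_mod_cast h1
      push_cast [hcast] at this ⊢
      linarith
  refine ⟨fun m _ => key m, fun hl3 => ?_⟩
  -- asymptotics
  set b : ℝ := (2 : ℝ) ^ l - l with hb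
  have hlR : (l : ℝ) < 2 ^ l := by exact_mod_cast aux_lt_two_pow l
  have hbpos : 0 < b := by rw [hb]; linarith
  have hhalf : (2 : ℝ) ^ (l - 1) < b := by
    have h1 : l < 2 ^ (l - 1) := aux_lt_pow_pred l hl3
    have h2 : (2 : ℝ) ^ (l - 1) + (2 : ℝ) ^ (l - 1) = 2 ^ l := by
      rw [← two_mul, ← pow_succ']
      congr 1
      omega
    have h3 : (l : ℝ) < 2 ^ (l - 1) := by exact_mod_cast h1
    rw [hb]; linarith
  set r : ℝ := 2 ^ (l - 1) / b with hr
  have hr0 : 0 ≤ r := by positivity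
  have hr1 : r < 1 := by
    rw [hr, div_lt_one hbpos]; exact hhalf
  set C : ℝ := (l : ℝ) + l.choose 2 with hC
  have hC0 : 0 ≤ C := by positivity
  set a : ℕ → ℝ := fun m => (l.factorial * numStoppingSets (H m) l : ℝ) with ha
  have hbounds : ∀ m : ℕ, b ^ m - C * (2 ^ (l - 1)) ^ m ≤ a m ∧ a m ≤ b ^ m := by
    intro m
    obtain ⟨h1, h2⟩ := key m
    constructor
    · have h1' : (((2 : ℤ) ^ l - l) ^ m - (l + l.choose 2) * 2 ^ ((l - 1) * m) : ℝ) ≤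
          ((l.factorial : ℤ) * numStoppingSets (H m) l : ℝ) := by exact_mod_cast h1
      push_cast at h1'
      rw [ha, hb, hC]
      push_cast
      rw [← pow_mul]
      linarith
    · have h2' : (((l.factorial : ℤ) * numStoppingSets (H m) l : ℤ) : ℝ) ≤
          ((((2 : ℤ) ^ l - l) ^ m : ℤ) : ℝ) := by exact_mod_cast h2
      push_cast at h2'
      rw [ha, hb]
      push_cast
      linarith
  have hbm : ∀ m : ℕ, (0 : ℝ) < b ^ m := fun m => pow_pos hbpos m
  have hup : ∀ m : ℕ, a m / b ^ m ≤ 1 := by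
    intro m
    rw [div_le_one (hbm m)]
    exact (hbounds m).2
  have hlow : ∀ m : ℕ, 1 - C * r ^ m ≤ a m / b ^ m := by
    intro m
    have h := (hbounds m).1
    have h2 : (b ^ m - C * (2 ^ (l - 1) : ℝ) ^ m) / b ^ m ≤ a m / b ^ m := by
      gcongr
    have heq : (b ^ m - C * (2 ^ (l - 1) : ℝ) ^ m) / b ^ m = 1 - C * r ^ m := by
      rw [hr, div_pow]
      field_simp
    rw [heq] at h2
    exact h2
  have hlim : Filter.Tendsto (fun m : ℕ => 1 - C * r ^ m) Filter.atTop (nhds 1) := by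
    have h0 := (tendsto_pow_atTop_nhds_zero_of_lt_one hr0 hr1).const_mul C
    have h2 := (tendsto_const_nhds (x := (1 : ℝ)) (f := Filter.atTop (α := ℕ))).sub h0
    simpa using h2
  exact tendsto_of_tendsto_of_tendsto_of_le_of_le hlim tendsto_const_nhds
    (fun m => hlow m) (fun m => hup m)
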